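/- Let α > −1, let q ≥ 0 and n ≥ 0 be integers. Then for every real x, Σ_{k=0}^{n} [(−n)_k (−n−q−1/2)_k / (k! (−2n−α−q−1/2)_k)] x^{2n−2k} = [(−1)^n (q+3/2)_n / (n+q+α+3/2)_n] · Σ_{k=0}^{n} [(−n)_k (n+q+α+3/2)_k / (k! (q+3/2)_k)] x^{2k}. -/

import Mathlib

open MeasureTheory intervalIntegral Polynomial

/-- Pochhammer symbol `(a)_k = a (a+1) ⋯ (a+k-1)`. -/
noncomputable def poch (a : ℝ) (k : ℕ) : ℝ := ∏ i ∈ Finset.range k, (a + i)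

/-- `Peven α q n x = P_{2n}^{α,q}(x)`, the monic generalized Gegenbauer-type polynomial
`Σ_{k=0}^{n} (−n)_k (−n−q−1/2)_k / (k! (−2n−α−q−1/2)_k) x^{2n−2k}`. -/
noncomputable def Peven (α : ℝ) (q n : ℕ) (x : ℝ) : ℝ :=
  ∑ k ∈ Finset.range (n + 1),
    poch (-(n : ℝ)) k * poch (-(n : ℝ) - q - 1/2) k /
      ((Nat.factorial k : ℝ) * poch (-(2 * (n : ℝ)) - α - q - 1/2) k) * x ^ (2*n - 2*k)

/-- `Podd α q n x = P_{2n+1}^{α,q}(x) = (1+x) P_{2n}^{α+1,q}(x)`. -/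
noncomputable def Podd (α : ℝ) (q n : ℕ) (x : ℝ) : ℝ := (1 + x) * Peven (α + 1) q n x

/-- `P α q n x = P_n^{α,q}(x)`. -/
noncomputable def P (α : ℝ) (q : ℕ) (n : ℕ) (x : ℝ) : ℝ :=
  if Even n then Peven α q (n / 2) x else Podd α q (n / 2) x

lemma poch_succ (a : ℝ) (m : ℕ) : poch a (m+1) = poch a m * (a + m) := by
  simp [poch, Finset.prod_range_succ]

lemma poch_succ' (a : ℝ) (m : ℕ) : poch a (m+1) = a * poch (a+1) m := by
  simp only [poch, Finset.prod_range_succ']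
  rw [mul_comm]
  congr 1
  · push_cast; simp
  · refine Finset.prod_congr rfl fun i _ => ?_
    push_cast; ring

lemma poch_add (a : ℝ) (j m : ℕ) : poch a (j + m) = poch a j * poch (a + j) m := by
  induction m with
  | zero => simp [poch]
  | succ m ih =>
    rw [← Nat.add_assoc, poch_succ, ih, poch_succ, mul_assoc]
    push_cast; ring_nf

lemma poch_reflect (a : ℝ) (m : ℕ) : poch (-a - m + 1) m = (-1)^m * poch a m := by
  induction m generalizing a with
  | zero => simp [poch]
  | succ m ih =>
    have e1 : -a - ((m:ℕ)+1:ℕ) + 1 = -a - m := by push_cast; ring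
    have e2 : (-a - (m:ℝ)) + 1 = -a - m + 1 := by ring
    rw [e1, poch_succ', e2, ih, poch_succ]
    ring

lemma poch_one (k : ℕ) : poch 1 k = k.factorial := by
  induction k with
  | zero => simp [poch]
  | succ k ih => rw [poch_succ, ih]; push_cast [Nat.factorial_succ]; ring

lemma poch_ne_zero (a : ℝ) (k : ℕ) (h : ∀ i < k, a + i ≠ 0) : poch a k ≠ 0 :=
  Finset.prod_ne_zero_iff.2 fun i hi => h i (Finset.mem_range.1 hi)

/-- The two hypergeometric representations of `P_{2n}^{α,q}` agree:
`Σ_k (−n)_k(−n−q−1/2)_k/(k!(−2n−α−q−1/2)_k) x^{2n−2k}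
  = (−1)^n (q+3/2)_n/(n+q+α+3/2)_n · Σ_k (−n)_k(n+q+α+3/2)_k/(k!(q+3/2)_k) x^{2k}`. -/
theorem gg_hypergeometric_representations (α : ℝ) (hα : -1 < α) (q n : ℕ) :
    ∀ x : ℝ,
      Peven α q n x
        = (-1 : ℝ) ^ n * poch ((q : ℝ) + 3/2) n / poch ((n : ℝ) + q + α + 3/2) n *
            ∑ k ∈ Finset.range (n + 1),
              poch (-(n : ℝ)) k * poch ((n : ℝ) + q + α + 3/2) k /
                ((Nat.factorial k : ℝ) * poch ((q : ℝ) + 3/2) k) * x ^ (2 * k) := by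
  intro x
  rw [Finset.mul_sum, Peven]
  rw [← Finset.sum_range_reflect]
  refine Finset.sum_congr rfl fun j hj => ?_
  have hjn : j ≤ n := Nat.lt_succ_iff.1 (Finset.mem_range.1 hj)
  set m := n - j with hm
  have hjm : j + m = n := by omega
  have hmn : n + 1 - 1 - j = m := by omega
  rw [hmn]
  have hx : 2*n - 2*m = 2*j := by omega
  rw [hx]
  -- cast facts
  have hcast : (n : ℝ) = j + m := by exact_mod_cast congrArg (Nat.cast : ℕ → ℝ) hjm.symm
  -- reflection rewrites
  have e1 : poch (-(n:ℝ)) m = (-1)^m * poch ((j:ℝ)+1) m := by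
    have : -(n:ℝ) = -((j:ℝ)+1) - m + 1 := by rw [hcast]; ring
    rw [this, poch_reflect]
  have e2 : poch (-(n:ℝ)) j = (-1)^j * poch ((m:ℝ)+1) j := by
    have : -(n:ℝ) = -((m:ℝ)+1) - j + 1 := by rw [hcast]; ring
    rw [this, poch_reflect]
  have e3 : poch (-(n:ℝ) - q - 1/2) m = (-1)^m * poch ((q:ℝ)+3/2 + j) m := by
    have : -(n:ℝ) - q - 1/2 = -((q:ℝ)+3/2+j) - m + 1 := by rw [hcast]; ring
    rw [this, poch_reflect]
  have e4 : poch (-(2*(n:ℝ)) - α - q - 1/2) m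
      = (-1)^m * poch ((n:ℝ)+q+α+3/2 + j) m := by
    have : -(2*(n:ℝ)) - α - q - 1/2 = -((n:ℝ)+q+α+3/2+j) - m + 1 := by
      rw [hcast]; ring
    rw [this, poch_reflect]
  have e5 : poch ((q:ℝ)+3/2) n = poch ((q:ℝ)+3/2) j * poch ((q:ℝ)+3/2+j) m := by
    rw [← hjm, poch_add]
  have e6 : poch ((n:ℝ)+q+α+3/2) n
      = poch ((n:ℝ)+q+α+3/2) j * poch ((n:ℝ)+q+α+3/2+j) m := by
    rw [← hjm, poch_add]
  have e7 : (n.factorial : ℝ) = j.factorial * poch ((j:ℝ)+1) m := by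
    rw [← poch_one, ← hjm, poch_add, poch_one,
      show (1:ℝ)+(j:ℝ) = (j:ℝ)+1 from by ring]
  have e8 : (n.factorial : ℝ) = m.factorial * poch ((m:ℝ)+1) j := by
    rw [← poch_one, ← hjm, Nat.add_comm, poch_add, poch_one,
      show (1:ℝ)+(m:ℝ) = (m:ℝ)+1 from by ring]
  have e9 : (j.factorial : ℝ) * poch ((j:ℝ)+1) m = m.factorial * poch ((m:ℝ)+1) j := by
    rw [← e7, ← e8]
  -- nonvanishing
  have hQj : poch ((q:ℝ)+3/2) j ≠ 0 :=
    poch_ne_zero _ _ fun i _ => by positivity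
  have hQm : poch ((q:ℝ)+3/2+j) m ≠ 0 :=
    poch_ne_zero _ _ fun i _ => by positivity
  have hBj : poch ((n:ℝ)+q+α+3/2) j ≠ 0 :=
    poch_ne_zero _ _ fun i _ => by
      have h1 : (0:ℝ) ≤ n := Nat.cast_nonneg n
      have h2 : (0:ℝ) ≤ q := Nat.cast_nonneg q
      have h3 : (0:ℝ) ≤ i := Nat.cast_nonneg i
      have : (0:ℝ) < (n:ℝ)+q+α+3/2+i := by linarith
      exact this.ne'
  have hBm : poch ((n:ℝ)+q+α+3/2+j) m ≠ 0 :=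
    poch_ne_zero _ _ fun i _ => by
      have h1 : (0:ℝ) ≤ n := Nat.cast_nonneg n
      have h2 : (0:ℝ) ≤ q := Nat.cast_nonneg q
      have h3 : (0:ℝ) ≤ i := Nat.cast_nonneg i
      have h4 : (0:ℝ) ≤ j := Nat.cast_nonneg j
      have : (0:ℝ) < (n:ℝ)+q+α+3/2+j+i := by linarith
      exact this.ne'
  have hjf : (j.factorial : ℝ) ≠ 0 := by positivity
  have hmf : (m.factorial : ℝ) ≠ 0 := by positivity
  have hs1 : ((-1:ℝ))^m ≠ 0 := by positivity
  have hsign : ((-1:ℝ))^n = (-1)^j * (-1)^m := by rw [← hjm, pow_add]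
  rw [e1, e2, e3, e4, e5, e6, hsign]
  set P1 := poch ((j:ℝ)+1) m with hP1
  set M1 := poch ((m:ℝ)+1) j with hM1
  set Qj := poch ((q:ℝ)+3/2) j with hQj'
  set Qm := poch ((q:ℝ)+3/2+j) m with hQm'
  set Bj := poch ((n:ℝ)+q+α+3/2) j with hBj'
  set Bm := poch ((n:ℝ)+q+α+3/2+j) m with hBm'
  set Fj := (j.factorial:ℝ) with hFj
  set Fm := (m.factorial:ℝ) with hFm
  field_simp
  ring_nf
  have hj2 : ((-1:ℝ))^(j*2) = 1 := by rw [mul_comm, pow_mul]; norm_num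
  have hm2 : ((-1:ℝ))^(m*2) = 1 := by rw [mul_comm, pow_mul]; norm_num
  linear_combination (x^(j*2)) * e9 - (x^(j*2) * Fm * M1) * hj2
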